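/- Let p > q be distinct primes. There exist a sequence (I_ℓ)_{ℓ≥1} of q-adic subintervals of [0,1) and a sequence (α_ℓ)_{ℓ≥1} of positive integers such that: (1) letting J^ℓ denote the smallest p-adic interval containing I_ℓ, the intervals (J^ℓ)_{ℓ≥1} are pairwise disjoint and contained in [0,1) (in particular the I_ℓ are pairwise disjoint); (2) for each positive integer α there are only finitely many ℓ with α_ℓ = α; (3) for each ℓ, 0 < Υ(J^ℓ) − Z(I_ℓ) ≤ q^{−100·α_ℓ}·|I_ℓ|. -/

import Mathlib

set_option maxHeartbeats 1000000


open Set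

noncomputable section

/-- The `n`-adic interval `[(k-1)/n^m, k/n^m)` with `m, k : ℤ`. -/
def adicInterval (n : ℕ) (m k : ℤ) : Set ℝ :=
  Set.Ico (((k : ℝ) - 1) / (n : ℝ) ^ m) ((k : ℝ) / (n : ℝ) ^ m)

/-- `Z(I)`: the left endpoint of the rightmost `q`-adic child of the `q`-adic interval with
parameters `m, k`, namely `(k-1)/q^m + (q-1)/q^(m+1)`. -/
def Zpt (q : ℕ) (m k : ℤ) : ℝ :=
  ((k : ℝ) - 1) / (q : ℝ) ^ m + ((q : ℝ) - 1) / (q : ℝ) ^ (m + 1)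

/-- `Υ(J)`: the right endpoint of the leftmost `p`-adic child of the `p`-adic interval with
parameters `m, k`, namely `(k-1)/p^m + 1/p^(m+1)`. -/
def Upt (p : ℕ) (m k : ℤ) : ℝ :=
  ((k : ℝ) - 1) / (p : ℝ) ^ m + 1 / (p : ℝ) ^ (m + 1)

/-- The `p`-adic interval with parameters `m, k` is the smallest `p`-adic interval
containing the set `s`. -/
def IsSmallestAdicContaining (p : ℕ) (m k : ℤ) (s : Set ℝ) : Prop :=
  s ⊆ adicInterval p m k ∧
  ∀ m' k' : ℤ, s ⊆ adicInterval p m' k' → adicInterval p m k ⊆ adicInterval p m' k'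

lemma adic_nested {n : ℕ} (hn : 1 ≤ n) {m m' k k' : ℤ} (hm : m' ≤ m)
    (hx : (adicInterval n m k ∩ adicInterval n m' k').Nonempty) :
    adicInterval n m k ⊆ adicInterval n m' k' := by
  obtain ⟨x, hx1, hx2⟩ := hx
  have hn0 : (0:ℝ) < n := by exact_mod_cast hn
  set e : ℕ := (m - m').toNat with he
  have hee : (e : ℤ) = m - m' := Int.toNat_of_nonneg (by omega)
  have hpow : (n:ℝ)^m = (n:ℝ)^m' * (n:ℝ)^e := by
    rw [← zpow_natCast (n:ℝ) e, ← zpow_add₀ (ne_of_gt hn0), hee]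
    ring_nf
  have hu : (0:ℝ) < (n:ℝ)^m' := zpow_pos hn0 _
  have hposm : (0:ℝ) < (n:ℝ)^m := zpow_pos hn0 _
  have hcpos : (0:ℝ) < (n:ℝ)^e := by positivity
  obtain ⟨ha1, ha2⟩ := hx1
  obtain ⟨hb1, hb2⟩ := hx2
  have hgen : ∀ a : ℝ, a * (n:ℝ)^e / ((n:ℝ)^m' * (n:ℝ)^e) = a / (n:ℝ)^m' := by
    intro a
    rw [div_eq_div_iff (by positivity) (ne_of_gt hu)]
    ring
  have hb1' : ((k':ℝ) - 1) * (n:ℝ)^e / (n:ℝ)^m ≤ x := by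
    rw [hpow]; rw [hpow] at ha2
    calc ((k':ℝ) - 1) * (n:ℝ)^e / ((n:ℝ)^m' * (n:ℝ)^e)
        = ((k':ℝ) - 1) / (n:ℝ)^m' := hgen _
      _ ≤ x := hb1
  have hb2' : x < (k':ℝ) * (n:ℝ)^e / (n:ℝ)^m := by
    rw [hpow]
    calc x < (k':ℝ) / (n:ℝ)^m' := hb2
      _ = (k':ℝ) * (n:ℝ)^e / ((n:ℝ)^m' * (n:ℝ)^e) := (hgen _).symm
  have key1 : ((k' - 1) * (n:ℤ)^e : ℤ) ≤ k - 1 := by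
    have hlt' : ((k':ℝ) - 1) * (n:ℝ)^e < k := by
      have := lt_of_le_of_lt hb1' ha2
      rwa [div_lt_div_iff₀ hposm hposm, mul_lt_mul_iff_of_pos_right hposm] at this
    have : ((k' - 1) * (n:ℤ)^e : ℤ) < k := by exact_mod_cast hlt'
    omega
  have key2 : (k : ℤ) ≤ k' * (n:ℤ)^e := by
    have hlt' : ((k:ℝ) - 1) < (k':ℝ) * (n:ℝ)^e := by
      have := lt_of_le_of_lt ha1 hb2'
      rwa [div_lt_div_iff₀ hposm hposm, mul_lt_mul_iff_of_pos_right hposm] at this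
    have : (k : ℤ) - 1 < k' * (n:ℤ)^e := by exact_mod_cast hlt'
    omega
  have key1R : ((k':ℝ) - 1) * (n:ℝ)^e ≤ (k:ℝ) - 1 := by exact_mod_cast key1
  have key2R : (k:ℝ) ≤ (k':ℝ) * (n:ℝ)^e := by exact_mod_cast key2
  intro y ⟨hy1, hy2⟩
  constructor
  · calc ((k':ℝ) - 1) / (n:ℝ)^m'
        = ((k':ℝ) - 1) * (n:ℝ)^e / (n:ℝ)^m := by rw [hpow]; exact (hgen _).symm
      _ ≤ ((k:ℝ) - 1) / (n:ℝ)^m := by gcongr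
      _ ≤ y := hy1
  · calc y < (k:ℝ) / (n:ℝ)^m := hy2
      _ ≤ (k':ℝ) * (n:ℝ)^e / (n:ℝ)^m := by gcongr
      _ = (k':ℝ) / (n:ℝ)^m' := by rw [hpow]; exact hgen _

lemma numeric_selection (p q α : ℕ) (hp : p.Prime) (hq : q.Prime) (hlt : q < p) (hα : 1 ≤ α) :
    ∃ M m N K kk s : ℕ,
      1 ≤ M ∧
      1 ≤ N ∧
      K + 1 = q * kk ∧
      p * s + 1 = N ∧
      K * p^M + N = N * q^(m+1) ∧
      N * q^(100*α) ≤ q * p^M ∧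
      p^M + q^(100*α) < N * q^(100*α) ∧
      (N + p) * q^(100*α) ≤ q^3 * p^M ∧
      N + q * p^M ≤ q^(m+1) + p^M ∧
      2 * N ≤ p^M ∧
      q * p^M ≤ q^(m+1) := by
  have hq2 : 2 ≤ q := hq.two_le
  have hp3 : 3 ≤ p := by have := hq.two_le; omega
  obtain ⟨M, hMdef⟩ : ∃ M, M = 100 * α + 100 + p * q := ⟨_, rfl⟩
  have hpq6 : 6 ≤ p * q := by nlinarith
  have hM3 : 3 ≤ M := by omega
  obtain ⟨P, hPdef⟩ : ∃ P, P = p ^ M := ⟨_, rfl⟩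
  have hP1 : 1 ≤ P := hPdef ▸ Nat.one_le_pow _ _ (by omega)
  have hpq : Nat.Coprime p q := (Nat.coprime_primes hp hq).mpr (by omega)
  have hqP : Nat.Coprime q P := hPdef ▸ (hpq.symm).pow_right M
  obtain ⟨E, hEdef⟩ : ∃ E, E = q ^ (100 * α) := ⟨_, rfl⟩
  have hE1 : 1 ≤ E := hEdef ▸ Nat.one_le_pow _ _ (by omega)
  -- size fact
  have hS1 : p * q * E + E ≤ P := by
    have h1 : E ≤ p ^ (100 * α) := hEdef ▸ Nat.pow_le_pow_left (le_of_lt hlt) _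
    have h2 : p * q + 1 ≤ 2 ^ (p * q) := Nat.lt_two_pow_self (n := p*q)
    have h3 : (2:ℕ) ^ (p*q) ≤ p ^ (p*q) := Nat.pow_le_pow_left (by omega) _
    calc p * q * E + E = (p*q+1) * E := by ring
      _ ≤ p^(p*q) * p^(100*α) := Nat.mul_le_mul (h2.trans h3) h1
      _ ≤ p^(p*q) * p^(100*α) * p^100 := Nat.le_mul_of_pos_right _ (Nat.pow_pos (by omega))
      _ = P := by rw [hPdef, hMdef]; ring
  have hq2E : q^2 ≤ E := hEdef ▸ Nat.pow_le_pow_right (by omega) (by omega)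
  -- CRT
  obtain ⟨c, hc1, hc2⟩ := Nat.chineseRemainder hpq 1 P
  obtain ⟨r, hrdef⟩ : ∃ r, r = c % (p * q) := ⟨_, rfl⟩
  have hr1 : r ≡ 1 [MOD p] := by
    rw [hrdef]
    exact ((Nat.mod_modEq c (p*q)).of_dvd (dvd_mul_right p q)).trans hc1
  have hr2 : r ≡ P [MOD q] := by
    rw [hrdef]
    exact ((Nat.mod_modEq c (p*q)).of_dvd (dvd_mul_left q p)).trans hc2
  have hrlt : r < p * q := by rw [hrdef]; exact Nat.mod_lt _ (by positivity)
  obtain ⟨Bf, hBfdef⟩ : ∃ Bf, Bf = q * P / E := ⟨_, rfl⟩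
  have hBfr : p * q ≤ Bf := by
    rw [hBfdef, Nat.le_div_iff_mul_le (by omega)]
    have : P ≤ q * P := Nat.le_mul_of_pos_left _ (by omega)
    omega
  obtain ⟨d, hddef⟩ : ∃ d, d = (Bf - r) / (p * q) := ⟨_, rfl⟩
  obtain ⟨N, hNdef⟩ : ∃ N, N = r + p * q * d := ⟨_, rfl⟩
  have hNsub : N - r = p * q * d := by omega
  have hN1 : N ≡ 1 [MOD p] := by
    have h : r ≡ N [MOD p] :=
      (Nat.modEq_iff_dvd' (by omega : r ≤ N)).mpr ⟨q * d, by rw [hNsub]; ring⟩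
    exact h.symm.trans hr1
  have hN2 : N ≡ P [MOD q] := by
    have h : r ≡ N [MOD q] :=
      (Nat.modEq_iff_dvd' (by omega : r ≤ N)).mpr ⟨p * d, by rw [hNsub]; ring⟩
    exact h.symm.trans hr2
  have hNBf : N ≤ Bf := by
    have h : p * q * d ≤ Bf - r := by
      rw [hddef, mul_comm]; exact Nat.div_mul_le_self _ _
    omega
  have hBfN : Bf < N + p * q := by
    have h1 : p * q * ((Bf - r) / (p*q)) + (Bf - r) % (p*q) = Bf - r := Nat.div_add_mod (Bf - r) (p * q)
    have h2 : (Bf - r) % (p*q) < p*q := Nat.mod_lt _ (by omega)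
    rw [← hddef] at h1
    omega
  have hN3 : N * E ≤ q * P := by
    calc N * E ≤ Bf * E := Nat.mul_le_mul_right _ hNBf
      _ ≤ q * P := by rw [hBfdef]; exact Nat.div_mul_le_self _ _
  have hN4 : q * P < N * E + p * q * E := by
    have h1 : E * (q * P / E) + (q*P) % E = q * P := Nat.div_add_mod (q*P) E
    rw [← hBfdef] at h1
    have h2 : (q * P) % E < E := Nat.mod_lt _ (by omega)
    have h3 : E * (Bf + 1) ≤ E * (N + p * q) := Nat.mul_le_mul_left E hBfN
    calc q * P = E * Bf + (q*P) % E := h1.symm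
      _ < E * Bf + E := by omega
      _ = E * (Bf + 1) := by ring
      _ ≤ E * (N + p*q) := h3
      _ = N * E + p * q * E := by ring
  have hNpos : 1 ≤ N := by
    rcases Nat.eq_zero_or_pos N with h | h
    · exfalso
      have h0 : (0:ℕ) ≡ 1 [MOD p] := h ▸ hN1
      have h1 : (0:ℕ) % p = 1 % p := h0
      rw [Nat.zero_mod, Nat.one_mod_eq_one.mpr (by omega)] at h1
      omega
    · omega
  have hNq : N * q ≤ P := by
    have h1 : N * q^2 ≤ q * P := le_trans (Nat.mul_le_mul_left _ hq2E) hN3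
    have h2 : N * q * q ≤ P * q := by
      calc N * q * q = N * q^2 := by ring
        _ ≤ q * P := h1
        _ ≤ P * q := by rw [mul_comm]
    exact Nat.le_of_mul_le_mul_right h2 (by omega)
  have hNP : 2 * N ≤ P := by
    have h : N * 2 ≤ N * q := Nat.mul_le_mul_left N hq2
    omega
  -- band lower
  have hband1 : P + E < N * E := by
    have h2P : 2 * P ≤ q * P := Nat.mul_le_mul_right P hq2
    omega
  -- band upper
  have hband2 : (N + p) * E ≤ q^3 * P := by
    have hpE : p * E ≤ P := by
      have h : p * E ≤ p * E * q := Nat.le_mul_of_pos_right _ (by omega)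
      have h2 : p * E * q = p * q * E := by ring
      omega
    have hq3 : q + 1 ≤ q^3 := by
      have a : q^2 ≤ q^3 := Nat.pow_le_pow_right (by omega) (by omega)
      have b : 2 * q ≤ q * q := Nat.mul_le_mul_right q hq2
      have c : q * q = q^2 := (sq q).symm
      omega
    have hq3' : (q + 1) * P ≤ q^3 * P := Nat.mul_le_mul_right _ hq3
    calc (N + p) * E = N * E + p * E := by ring
      _ ≤ q * P + P := by omega
      _ = (q + 1) * P := by ring
      _ ≤ q^3 * P := hq3'
  -- totient and m
  obtain ⟨T, hTdef⟩ : ∃ T, T = Nat.totient P := ⟨_, rfl⟩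
  have hT : T = p^(M-1) * (p-1) := by
    rw [hTdef, hPdef]; exact Nat.totient_prime_pow hp (by omega)
  have hTbig : p + 1 ≤ T := by
    rw [hT]
    have h1 : p^2 ≤ p^(M-1) := Nat.pow_le_pow_right (by omega) (by omega)
    have h2 : p^2 * 2 ≤ p^(M-1) * (p-1) := Nat.mul_le_mul h1 (by omega)
    have hpp : 3 * p ≤ p * p := Nat.mul_le_mul_right p hp3
    have hsq : p^2 = p * p := sq p
    omega
  obtain ⟨ms, hmsdef⟩ : ∃ ms, ms = T * M := ⟨_, rfl⟩
  have hms : p * M + 1 ≤ ms := by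
    have h1 : (p+1) * M ≤ T * M := Nat.mul_le_mul_right _ hTbig
    have h2 : (p+1) * M = p * M + M := by ring
    omega
  obtain ⟨m, hmdef⟩ : ∃ m, m = ms - 1 := ⟨_, rfl⟩
  have hm1 : m + 1 = ms := by omega
  have hord : q ^ ms ≡ 1 [MOD P] := by
    have h := Nat.ModEq.pow_totient hqP
    rw [← hTdef] at h
    calc q ^ ms = (q^T)^M := by rw [hmsdef, pow_mul]
      _ ≡ 1^M [MOD P] := h.pow M
      _ = 1 := one_pow M
  have hPq : q * P ≤ q ^ ms := by
    have h1 : P ≤ 2 ^ (p*M) := by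
      calc P = p^M := hPdef
        _ ≤ (2^p)^M := Nat.pow_le_pow_left (le_of_lt (Nat.lt_two_pow_self (n := p))) M
        _ = 2^(p*M) := by rw [← pow_mul]
    calc q * P ≤ q * 2^(p*M) := Nat.mul_le_mul_left _ h1
      _ ≤ q * 2^m := Nat.mul_le_mul_left _ (Nat.pow_le_pow_right (by omega) (by omega))
      _ ≤ q * q^m := Nat.mul_le_mul_left _ (Nat.pow_le_pow_left hq2 m)
      _ = q^(m+1) := by ring
      _ = q^ms := by rw [hm1]
  have hqms1 : 1 ≤ q ^ ms := Nat.one_le_pow _ _ (by omega)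
  have hdvd : P ∣ q^ms - 1 := (Nat.modEq_iff_dvd' hqms1).mp hord.symm
  obtain ⟨D, hPD⟩ := hdvd
  obtain ⟨K, hKdef⟩ : ∃ K, K = N * D := ⟨_, rfl⟩
  have hKP : K * P + N = N * q^ms := by
    have h : P * D + 1 = q ^ ms := by omega
    calc K * P + N = N * (P * D + 1) := by rw [hKdef]; ring
      _ = N * q^ms := by rw [h]
  have hqK : q ∣ K + 1 := by
    have hc : (K:ℤ) * P + N = N * q^ms := by exact_mod_cast hKP
    have hdq : (q:ℤ) ∣ (P:ℤ) - N := by exact_mod_cast (Nat.ModEq.dvd hN2)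
    have h1 : (q:ℤ) ∣ ((K:ℤ)+1) * P := by
      have hZ : ((K:ℤ) + 1) * P = N * q^ms + ((P:ℤ) - N) := by linarith
      rw [hZ]
      exact dvd_add (Dvd.dvd.mul_left (dvd_pow_self (q:ℤ) (by omega : ms ≠ 0)) _) hdq
    have h2 : q ∣ (K+1) * P := by exact_mod_cast h1
    exact hqP.dvd_of_dvd_mul_right h2
  obtain ⟨kk, hkk⟩ := hqK
  have hpN : p ∣ N - 1 := (Nat.modEq_iff_dvd' hNpos).mp hN1.symm
  obtain ⟨s, hsN⟩ := hpN
  have hs' : p * s + 1 = N := by omega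
  subst hPdef hEdef
  have hPq' : q * p^M ≤ q^(m+1) := by rw [hm1]; exact hPq
  refine ⟨M, m, N, K, kk, s, by omega, hNpos, hkk, hs', ?_, hN3, hband1, hband2, ?_, hNP, hPq'⟩
  · rw [hm1]; exact hKP
  · omega

lemma key_selection (p q : ℕ) (hp : p.Prime) (hq : q.Prime) (hlt : q < p) (α : ℕ) (hα : 1 ≤ α) :
    ∃ (mI kI mJ kJ : ℤ),
      IsSmallestAdicContaining p mJ kJ (adicInterval q mI kI) ∧
      adicInterval p mJ kJ ⊆
        Set.Ico ((q:ℝ)^(-(100*(α:ℤ)))) ((q:ℝ)^(-(100*(α:ℤ))) * (q:ℝ)^(3:ℕ)) ∧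
      0 < Upt p mJ kJ - Zpt q mI kI ∧
      Upt p mJ kJ - Zpt q mI kI ≤ (q:ℝ)^(-(100*(α:ℤ))) * (q:ℝ)^(-(mI)) := by
  obtain ⟨M, m, N, K, kk, s, hM1, hN1, hkk, hs, hKP, hN3, hband1, hband2, hcont, hNP, hPq⟩ :=
    numeric_selection p q α hp hq hlt hα
  have hq2 : 2 ≤ q := hq.two_le
  have hp2 : 2 ≤ p := hp.two_le
  have hq0 : (0:ℝ) < q := by positivity
  have rq2 : (2:ℝ) ≤ q := by exact_mod_cast hq2
  have rp2 : (2:ℝ) ≤ p := by exact_mod_cast hp2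
  have hp0 : (0:ℝ) < p := by positivity
  -- real versions of numeric facts
  have rkk : (K:ℝ) + 1 = q * kk := by exact_mod_cast hkk
  have rs : (p:ℝ) * s + 1 = N := by exact_mod_cast hs
  have rKP : (K:ℝ) * (p:ℝ)^M + N = N * (q:ℝ)^(m+1) := by exact_mod_cast hKP
  have rN3 : (N:ℝ) * (q:ℝ)^(100*α) ≤ q * (p:ℝ)^M := by exact_mod_cast hN3
  have rband1 : (p:ℝ)^M + (q:ℝ)^(100*α) < (N:ℝ) * (q:ℝ)^(100*α) := by exact_mod_cast hband1
  have rband2 : ((N:ℝ) + p) * (q:ℝ)^(100*α) ≤ (q:ℝ)^3 * (p:ℝ)^M := by exact_mod_cast hband2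
  have rcont : (N:ℝ) + q * (p:ℝ)^M ≤ (q:ℝ)^(m+1) + (p:ℝ)^M := by exact_mod_cast hcont
  have rNP : 2 * (N:ℝ) ≤ (p:ℝ)^M := by exact_mod_cast hNP
  have rPq : (q:ℝ) * (p:ℝ)^M ≤ (q:ℝ)^(m+1) := by exact_mod_cast hPq
  have rN1 : (1:ℝ) ≤ N := by exact_mod_cast hN1
  -- positivity
  have hQpos : (0:ℝ) < (q:ℝ)^(m+1) := by positivity
  have hPpos : (0:ℝ) < (p:ℝ)^M := by positivity
  have hqm : (0:ℝ) < (q:ℝ)^m := by positivity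
  have hEpos : (0:ℝ) < (q:ℝ)^(100*α) := by positivity
  have hPMm : (0:ℝ) < (p:ℝ)^(M-1) := by positivity
  -- exponent conversions
  have hz1 : (q:ℝ)^((m:ℕ):ℤ) = (q:ℝ)^m := zpow_natCast _ _
  have hz2 : (p:ℝ)^((M:ℤ)-1) = (p:ℝ)^(M-1) := by
    rw [show (M:ℤ)-1 = ((M-1:ℕ):ℤ) by omega, zpow_natCast]
  have hz3 : (p:ℝ)^(((M:ℤ)-1)+1) = (p:ℝ)^M := by
    rw [show ((M:ℤ)-1)+1 = ((M:ℕ):ℤ) by ring, zpow_natCast]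
  have hz4 : (q:ℝ)^(((m:ℕ):ℤ)+1) = (q:ℝ)^(m+1) := by
    rw [show ((m:ℕ):ℤ)+1 = ((m+1:ℕ):ℤ) by push_cast; ring, zpow_natCast]
  have hz5 : (q:ℝ)^(-(100*(α:ℤ))) = ((q:ℝ)^(100*α))⁻¹ := by
    rw [show -(100*(α:ℤ)) = -((100*α:ℕ):ℤ) by push_cast; ring, zpow_neg, zpow_natCast]
  have hz6 : (q:ℝ)^(-((m:ℕ):ℤ)) = ((q:ℝ)^m)⁻¹ := by rw [zpow_neg, zpow_natCast]
  have hpM1 : (p:ℝ)^(M-1) * p = (p:ℝ)^M := by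
    rw [← pow_succ]; congr 1; omega
  -- I ⊆ J
  have hIJ : adicInterval q (m:ℤ) (kk:ℤ) ⊆ adicInterval p ((M:ℤ)-1) ((s:ℤ)+1) := by
    intro x hx
    obtain ⟨hx1, hx2⟩ := hx
    rw [show (((kk:ℤ)):ℝ) = (kk:ℝ) by push_cast; ring] at hx1 hx2
    rw [hz1] at hx1 hx2
    constructor
    · -- (s+1-1)/p^(M-1) ≤ x
      push_cast
      rw [hz2]
      have step : ((s:ℝ)+1-1) / (p:ℝ)^(M-1) ≤ ((kk:ℝ)-1) / (q:ℝ)^m := by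
        rw [div_le_div_iff₀ hPMm hqm]
        have goal' : ((s:ℝ)) * (q:ℝ)^m * (p*q) ≤ ((kk:ℝ)-1) * (p:ℝ)^(M-1) * (p*q) := by
          have e1 : ((s:ℝ)) * (q:ℝ)^m * (p*q) = ((N:ℝ)-1) * (q:ℝ)^(m+1) := by
            linear_combination (q:ℝ)^(m+1) * rs
          have e2 : ((kk:ℝ)-1) * (p:ℝ)^(M-1) * (p*q) = ((K:ℝ)+1-q) * (p:ℝ)^M := by
            linear_combination ((kk:ℝ)-1) * (q:ℝ) * hpM1 - (p:ℝ)^M * rkk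
          rw [e1, e2]
          nlinarith [rKP, rcont]
        have := le_of_mul_le_mul_right (by linarith [goal'] : ((s:ℝ)) * (q:ℝ)^m * (p*q) ≤ ((kk:ℝ)-1) * (p:ℝ)^(M-1) * (p*q)) (by positivity : (0:ℝ) < p*q)
        linarith
      calc ((s:ℝ)+1-1) / (p:ℝ)^(M-1) ≤ ((kk:ℝ)-1) / (q:ℝ)^m := step
        _ ≤ x := hx1
    · -- x < (s+1)/p^(M-1)
      push_cast
      rw [hz2]
      have step : (kk:ℝ) / (q:ℝ)^m ≤ ((s:ℝ)+1) / (p:ℝ)^(M-1) := by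
        rw [div_le_div_iff₀ hqm hPMm]
        have goal' : (kk:ℝ) * (p:ℝ)^(M-1) * (p*q) ≤ ((s:ℝ)+1) * (q:ℝ)^m * (p*q) := by
          have e4 : (kk:ℝ) * (p:ℝ)^(M-1) * (p*q) = ((K:ℝ)+1) * (p:ℝ)^M := by
            linear_combination (kk:ℝ) * (q:ℝ) * hpM1 - (p:ℝ)^M * rkk
          have e5 : ((s:ℝ)+1) * (q:ℝ)^m * (p*q) = ((N:ℝ)-1+p) * (q:ℝ)^(m+1) := by
            linear_combination (q:ℝ)^(m+1) * rs
          rw [e4, e5]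
          have h2P : 2*(p:ℝ)^M ≤ (q:ℝ)*(p:ℝ)^M := mul_le_mul_of_nonneg_right rq2 hPpos.le
          have hpm2Q : (0:ℝ) ≤ ((p:ℝ)-2) * (q:ℝ)^(m+1) :=
            mul_nonneg (by linarith [rp2]) hQpos.le
          linarith [rKP, rPq, rN1, h2P, hpm2Q]
        have := le_of_mul_le_mul_right goal' (by positivity : (0:ℝ) < p*q)
        linarith
      calc x < (kk:ℝ) / (q:ℝ)^m := hx2
        _ ≤ ((s:ℝ)+1) / (p:ℝ)^(M-1) := step
  -- left endpoint of I is in I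
  have hleftmem : ((kk:ℝ)-1)/(q:ℝ)^m ∈ adicInterval q (m:ℤ) (kk:ℤ) := by
    simp only [adicInterval, Set.mem_Ico]
    push_cast
    rw [hz1]
    refine ⟨le_rfl, ?_⟩
    rw [div_lt_div_iff₀ hqm hqm]
    nlinarith [hqm]
  -- I.left < t
  have hltIleft : ((kk:ℝ)-1)/(q:ℝ)^m < (N:ℝ)/(p:ℝ)^M := by
    rw [div_lt_div_iff₀ hqm hPpos]
    have hsc : ((kk:ℝ)-1)*(p:ℝ)^M*q < (N:ℝ)*(q:ℝ)^m*q := by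
      have e6 : ((kk:ℝ)-1)*(p:ℝ)^M*q = ((K:ℝ)+1-q)*(p:ℝ)^M := by
        linear_combination -((p:ℝ)^M) * rkk
      have e7 : (N:ℝ)*(q:ℝ)^m*q = (N:ℝ)*(q:ℝ)^(m+1) := by ring
      rw [e6, e7]
      have hq1P : (0:ℝ) ≤ ((q:ℝ)-1) * (p:ℝ)^M := mul_nonneg (by linarith [rq2]) hPpos.le
      linarith [rKP, rN1, hq1P]
    exact lt_of_mul_lt_mul_right hsc hq0.le
  -- t is in I
  have htmem : (N:ℝ)/(p:ℝ)^M ∈ adicInterval q (m:ℤ) (kk:ℤ) := by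
    simp only [adicInterval, Set.mem_Ico]
    push_cast
    rw [hz1]
    refine ⟨hltIleft.le, ?_⟩
    rw [div_lt_div_iff₀ hPpos hqm]
    have hsc : (N:ℝ)*(q:ℝ)^m*q < (kk:ℝ)*(p:ℝ)^M*q := by
      have e8 : (kk:ℝ)*(p:ℝ)^M*q = ((K:ℝ)+1)*(p:ℝ)^M := by
        linear_combination -((p:ℝ)^M) * rkk
      have e7 : (N:ℝ)*(q:ℝ)^m*q = (N:ℝ)*(q:ℝ)^(m+1) := by ring
      rw [e8, e7]
      linarith [rKP, rNP, rN1]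
    exact lt_of_mul_lt_mul_right hsc hq0.le
  -- endpoint identities
  have eU : Upt p ((M:ℤ)-1) ((s:ℤ)+1) = (N:ℝ)/(p:ℝ)^M := by
    unfold Upt
    push_cast
    rw [hz2, hz3]
    have e1 : ((s:ℝ)+1-1)/(p:ℝ)^(M-1) = ((s:ℝ)*p)/(p:ℝ)^M := by
      rw [div_eq_div_iff (ne_of_gt hPMm) (ne_of_gt hPpos)]
      linear_combination -(s:ℝ) * hpM1
    rw [e1, ← add_div]
    congr 1
    linarith [rs]
  have eZ : Zpt q (m:ℤ) (kk:ℤ) = (K:ℝ)/(q:ℝ)^(m+1) := by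
    unfold Zpt
    push_cast
    rw [hz1, hz4]
    have e2 : ((kk:ℝ)-1)/(q:ℝ)^m = ((K:ℝ)+1-q)/(q:ℝ)^(m+1) := by
      rw [div_eq_div_iff (ne_of_gt hqm) (ne_of_gt hQpos)]
      linear_combination -((q:ℝ)^m) * rkk
    rw [e2, ← add_div]
    congr 1
    ring
  refine ⟨(m:ℤ), (kk:ℤ), (M:ℤ)-1, (s:ℤ)+1, ⟨hIJ, ?_⟩, ?_, ?_, ?_⟩
  · -- minimality
    intro m' k' hsub
    by_cases hm' : m' ≤ (M:ℤ)-1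
    · exact adic_nested (by omega) hm'
        ⟨((kk:ℝ)-1)/(q:ℝ)^m, hIJ hleftmem, hsub hleftmem⟩
    · intro y hy
      exfalso
      obtain ⟨e, hee⟩ : ∃ e:ℕ, (e:ℤ) = m' - M := ⟨(m' - M).toNat, Int.toNat_of_nonneg (by omega)⟩
      have hQm' : (0:ℝ) < (p:ℝ)^(m':ℤ) := zpow_pos hp0 _
      have hpm' : (p:ℝ)^(m':ℤ) = (p:ℝ)^M * (p:ℝ)^e := by
        rw [← zpow_natCast (p:ℝ) M, ← zpow_natCast (p:ℝ) e, ← zpow_add₀ (ne_of_gt hp0), hee]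
        ring_nf
      have hpe : (0:ℝ) < (p:ℝ)^e := by positivity
      have htA : (N:ℝ)/(p:ℝ)^M = ((N:ℝ)*(p:ℝ)^e)/(p:ℝ)^(m':ℤ) := by
        rw [hpm', div_eq_div_iff (ne_of_gt hPpos) (by positivity)]
        ring
      obtain ⟨ht1, ht2⟩ := hsub htmem
      obtain ⟨hl1, hl2⟩ := hsub hleftmem
      rw [htA] at ht1 ht2
      have hint1 : (k':ℤ) - 1 ≤ (N:ℤ) * (p:ℤ)^e := by
        have h := (div_le_div_iff₀ hQm' hQm').mp ht1
        have h2 : ((k':ℝ) - 1) ≤ (N:ℝ)*(p:ℝ)^e := le_of_mul_le_mul_right h hQm'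
        exact_mod_cast h2
      have hint2 : (N:ℤ) * (p:ℤ)^e < k' := by
        have h := (div_lt_div_iff₀ hQm' hQm').mp ht2
        have h2 : (N:ℝ)*(p:ℝ)^e < (k':ℝ) := lt_of_mul_lt_mul_right h hQm'.le
        exact_mod_cast h2
      have heq : (N:ℤ) * (p:ℤ)^e = k' - 1 := by omega
      have htleft : (N:ℝ)/(p:ℝ)^M = ((k':ℝ)-1)/(p:ℝ)^(m':ℤ) := by
        rw [htA]
        congr 1
        exact_mod_cast heq
      have : (N:ℝ)/(p:ℝ)^M ≤ ((kk:ℝ)-1)/(q:ℝ)^m := by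
        rw [htleft]; exact hl1
      linarith [hltIleft]
  · -- band
    intro x hx
    obtain ⟨hx1, hx2⟩ := hx
    push_cast at hx1 hx2
    rw [hz2] at hx1 hx2
    constructor
    · rw [hz5]
      have hstep : ((q:ℝ)^(100*α))⁻¹ ≤ ((s:ℝ)+1-1)/(p:ℝ)^(M-1) := by
        rw [inv_eq_one_div, div_le_div_iff₀ hEpos hPMm]
        have hsc : 1*(p:ℝ)^(M-1)*p ≤ ((s:ℝ)+1-1)*(q:ℝ)^(100*α)*p := by
          have e1 : ((s:ℝ)+1-1)*(q:ℝ)^(100*α)*p = ((N:ℝ)-1)*(q:ℝ)^(100*α) := by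
            linear_combination (q:ℝ)^(100*α) * rs
          have e2 : 1*(p:ℝ)^(M-1)*p = (p:ℝ)^M := by linear_combination hpM1
          rw [e1, e2]
          linarith [rband1]
        exact le_of_mul_le_mul_right hsc hp0
      linarith [hx1, hstep]
    · rw [hz5]
      have hstep : ((s:ℝ)+1)/(p:ℝ)^(M-1) ≤ ((q:ℝ)^(100*α))⁻¹ * (q:ℝ)^(3:ℕ) := by
        rw [inv_mul_eq_div, div_le_div_iff₀ hPMm hEpos]
        have hsc : ((s:ℝ)+1)*(q:ℝ)^(100*α)*p ≤ (q:ℝ)^(3:ℕ)*(p:ℝ)^(M-1)*p := by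
          have e1 : ((s:ℝ)+1)*(q:ℝ)^(100*α)*p = ((N:ℝ)-1+p)*(q:ℝ)^(100*α) := by
            linear_combination (q:ℝ)^(100*α) * rs
          have e2 : (q:ℝ)^(3:ℕ)*(p:ℝ)^(M-1)*p = (q:ℝ)^3*(p:ℝ)^M := by
            linear_combination (q:ℝ)^(3:ℕ) * hpM1
          rw [e1, e2]
          linarith [rband2, hEpos]
        exact le_of_mul_le_mul_right hsc hp0
      linarith [hx2, hstep]
  · -- positivity of difference
    rw [eU, eZ, sub_pos, div_lt_div_iff₀ hQpos hPpos]
    linarith [rKP, rN1]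
  · -- main bound
    rw [eU, eZ, hz5, hz6]
    have ediff : (N:ℝ)/(p:ℝ)^M - (K:ℝ)/(q:ℝ)^(m+1) = (N:ℝ)/((p:ℝ)^M * (q:ℝ)^(m+1)) := by
      rw [div_sub_div _ _ (ne_of_gt hPpos) (ne_of_gt hQpos)]
      congr 1
      linarith [rKP]
    rw [ediff, ← mul_inv, inv_eq_one_div, div_le_div_iff₀ (by positivity) (by positivity)]
    have h9 : (N:ℝ)*(q:ℝ)^(100*α)*(q:ℝ)^m ≤ (q:ℝ)*(p:ℝ)^M*(q:ℝ)^m :=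
      mul_le_mul_of_nonneg_right rN3 hqm.le
    rw [pow_succ]
    nlinarith [h9]


/-- (Selection of building blocks, two primes `p > q`.)  There are sequences of `q`-adic
intervals `I_ℓ ⊆ [0,1)` and positive integers `α_ℓ` such that: the smallest `p`-adic
intervals `J^ℓ ⊇ I_ℓ` are pairwise disjoint and contained in `[0,1)` (in particular the
`I_ℓ` are pairwise disjoint); each value `α` is attained by only finitely many `α_ℓ`; and
`0 < Υ(J^ℓ) - Z(I_ℓ) ≤ q^(-100 α_ℓ) |I_ℓ|` for every `ℓ`. -/
theorem selection_two_primes (p q : ℕ) (hp : p.Prime) (hq : q.Prime) (hlt : q < p) :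
    ∃ (mI kI : ℕ → ℤ) (α : ℕ → ℕ) (mJ kJ : ℕ → ℤ),
      (∀ ℓ, 1 ≤ α ℓ) ∧
      (∀ ℓ, adicInterval q (mI ℓ) (kI ℓ) ⊆ Set.Ico (0 : ℝ) 1) ∧
      (∀ ℓ, IsSmallestAdicContaining p (mJ ℓ) (kJ ℓ) (adicInterval q (mI ℓ) (kI ℓ))) ∧
      (∀ ℓ, adicInterval p (mJ ℓ) (kJ ℓ) ⊆ Set.Ico (0 : ℝ) 1) ∧
      (∀ ℓ ℓ', ℓ ≠ ℓ' →
        Disjoint (adicInterval p (mJ ℓ) (kJ ℓ)) (adicInterval p (mJ ℓ') (kJ ℓ'))) ∧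
      (∀ ℓ ℓ', ℓ ≠ ℓ' →
        Disjoint (adicInterval q (mI ℓ) (kI ℓ)) (adicInterval q (mI ℓ') (kI ℓ'))) ∧
      (∀ a : ℕ, {ℓ : ℕ | α ℓ = a}.Finite) ∧
      (∀ ℓ, 0 < Upt p (mJ ℓ) (kJ ℓ) - Zpt q (mI ℓ) (kI ℓ) ∧
        Upt p (mJ ℓ) (kJ ℓ) - Zpt q (mI ℓ) (kI ℓ) ≤
          (q : ℝ) ^ (-(100 * (α ℓ : ℤ))) * (q : ℝ) ^ (-(mI ℓ))) := by
  have hq1R : (1:ℝ) ≤ q := by exact_mod_cast hq.one_lt.le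
  have hq0 : (q:ℝ) ≠ 0 := by positivity
  have key := fun ℓ : ℕ => key_selection p q hp hq hlt (ℓ+1) (by omega)
  choose mI kI mJ kJ hsmall hband hpos hbound using key
  -- band upper bound identity
  have hbandtop : ∀ ℓ : ℕ, (q:ℝ)^(-(100*((ℓ+1:ℕ):ℤ))) * (q:ℝ)^(3:ℕ) = (q:ℝ)^((3:ℤ)-100*((ℓ+1:ℕ):ℤ)) := by
    intro ℓ
    rw [← zpow_natCast (q:ℝ) 3, ← zpow_add₀ hq0]
    congr 1
    all_goals (push_cast; ring)
  have hbandIco : ∀ ℓ : ℕ, Set.Ico ((q:ℝ)^(-(100*((ℓ+1:ℕ):ℤ)))) ((q:ℝ)^(-(100*((ℓ+1:ℕ):ℤ))) * (q:ℝ)^(3:ℕ)) ⊆ Set.Ico (0:ℝ) 1 := by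
    intro ℓ
    apply Set.Ico_subset_Ico
    · positivity
    · rw [hbandtop ℓ]
      apply zpow_le_one_of_nonpos₀ hq1R
      push_cast
      omega
  have hJdisj : ∀ ℓ ℓ' : ℕ, ℓ < ℓ' →
      Disjoint (adicInterval p (mJ ℓ) (kJ ℓ)) (adicInterval p (mJ ℓ') (kJ ℓ')) := by
    intro ℓ ℓ' hll
    rw [Set.disjoint_left]
    intro x hx hx'
    have h1 := (hband ℓ hx).1
    have h2 := (hband ℓ' hx').2
    rw [hbandtop ℓ'] at h2
    have h3 : (q:ℝ)^((3:ℤ)-100*((ℓ'+1:ℕ):ℤ)) ≤ (q:ℝ)^(-(100*((ℓ+1:ℕ):ℤ))) := by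
      apply zpow_le_zpow_right₀ hq1R
      push_cast
      omega
    linarith
  refine ⟨mI, kI, fun ℓ => ℓ+1, mJ, kJ, fun ℓ => by show 1 ≤ ℓ+1; omega,
    fun ℓ => ((hsmall ℓ).1.trans ((hband ℓ).trans (hbandIco ℓ))),
    hsmall,
    fun ℓ => (hband ℓ).trans (hbandIco ℓ),
    ?_, ?_, ?_, fun ℓ => ⟨hpos ℓ, by show _ ≤ (q:ℝ)^(-(100*((ℓ+1:ℕ):ℤ))) * (q:ℝ)^(-(mI ℓ)); exact hbound ℓ⟩⟩
  · intro ℓ ℓ' hne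
    rcases lt_or_gt_of_ne hne with h | h
    · exact hJdisj ℓ ℓ' h
    · exact (hJdisj ℓ' ℓ h).symm
  · intro ℓ ℓ' hne
    rcases lt_or_gt_of_ne hne with h | h
    · exact Disjoint.mono (hsmall ℓ).1 (hsmall ℓ').1 (hJdisj ℓ ℓ' h)
    · exact (Disjoint.mono (hsmall ℓ').1 (hsmall ℓ).1 (hJdisj ℓ' ℓ h)).symm
  · intro a
    apply Set.Finite.subset (Set.finite_singleton (a-1))
    intro x hx
    simp only [Set.mem_setOf_eq] at hx
    simp only [Set.mem_singleton_iff]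
    omega
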